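/- The sets K, S witnessing the combinator laws for Scott's graph-model application can be chosen computably enumerable: there exist c.e. sets K, S ⊆ ℕ such that for all X, Y, Z ⊆ ℕ, (K·X)·Y = X and ((S·X)·Y)·Z = (X·Z)·(Y·Z); moreover, for all computably enumerable X, Y ⊆ ℕ the set X·Y is computably enumerable. Consequently the computably enumerable subsets of ℕ with Scott's application form a total combinatory algebra ℰ. -/

import Mathlib

/-- Scott's graph-model application on subsets of `ℕ`:
`A · B = {x | ∃ u, ⟨x, u⟩ ∈ A ∧ D_u ⊆ B}`, where `D_u` is the `u`-th finite
set of naturals (via the canonical `Denumerable (Finset ℕ)` coding). -/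
def scottApp (A B : Set ℕ) : Set ℕ :=
  {x : ℕ | ∃ u : ℕ, Nat.pair x u ∈ A ∧ (Denumerable.ofNat (Finset ℕ) u : Set ℕ) ⊆ B}

open Denumerable Encodable

namespace ScottCE

/-- list representation of the `u`-th finite set of naturals -/
def dL (u : ℕ) : List ℕ := raise' (ofNat (List ℕ) u) 0

theorem raise'_add : ∀ (l : List ℕ) (n k : ℕ),
    raise' l (n + k) = (raise' l n).map (· + k)
  | [], _, _ => rfl
  | m :: l, n, k => by
    simp only [raise', List.map_cons]
    rw [show m + (n + k) + 1 = (m + n + 1) + k by omega, raise'_add l,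
      show m + (n + k) = m + n + k by omega]

theorem mem_ofNat_finset {z u : ℕ} :
    z ∈ (ofNat (Finset ℕ) u : Finset ℕ) ↔ z ∈ dL u := by
  have h : (ofNat (Finset ℕ) u : Finset ℕ)
      = Finset.map (eqv ℕ).symm.toEmbedding (raise'Finset (ofNat (List ℕ) u) 0) :=
    ofNat_of_decode rfl
  rw [h]
  simp [raise'Finset, dL, eqv, Finset.mem_map, Finset.mem_mk, Multiset.mem_coe]
  exact Iff.rfl


theorem raise'_eq_foldr : ∀ l : List ℕ,
    raise' l 0 = l.foldr (fun m acc => m :: acc.map (· + (m + 1))) []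
  | [] => rfl
  | m :: l => by
    simp only [raise', List.foldr_cons, ← raise'_eq_foldr l]
    rw [show m + 1 = 0 + (m + 1) by omega, raise'_add]
    simp

theorem dL_eq : dL = fun u =>
    (ofNat (List ℕ) u).foldr (fun m acc => m :: acc.map (· + (m + 1))) [] := by
  funext u; exact raise'_eq_foldr _

theorem dL_primrec : Primrec dL := by
  rw [dL_eq]
  exact Primrec.list_foldr
    (h := fun (_ : ℕ) (q : ℕ × List ℕ) => q.1 :: q.2.map (· + (q.1 + 1)))
    (Primrec.ofNat (List ℕ)) (Primrec.const [])
    (Primrec.list_cons.comp (Primrec.fst.comp Primrec.snd)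
      (Primrec.list_map (Primrec.snd.comp Primrec.snd)
        (Primrec.nat_add.comp Primrec.snd
          (Primrec.succ.comp (Primrec.fst.comp (Primrec.snd.comp Primrec.fst)))).to₂)).to₂

/-- boolean list membership -/
def memB (a : ℕ) (l : List ℕ) : Bool := l.foldr (fun b r => (b == a) || r) false

theorem memB_iff {a : ℕ} : ∀ {l : List ℕ}, memB a l = true ↔ a ∈ l
  | [] => by simp [memB]
  | b :: l => by
    have := @memB_iff a l
    simp only [memB, List.foldr_cons, Bool.or_eq_true, beq_iff_eq, List.mem_cons] at *
    rw [this, eq_comm]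

theorem memB_primrec : Primrec₂ memB :=
  (Primrec.list_foldr
    (h := fun (p : ℕ × List ℕ) (q : ℕ × Bool) => (q.1 == p.1) || q.2)
    Primrec.snd (Primrec.const false)
    ((Primrec.or.comp
      (Primrec.beq.comp (Primrec.fst.comp Primrec.snd) (Primrec.fst.comp Primrec.fst))
      (Primrec.snd.comp Primrec.snd)).to₂)).to₂

/-- boolean "all elements satisfy" helper -/
theorem foldr_all_iff (g : ℕ → Bool) : ∀ (l : List ℕ),
    (l.foldr (fun y r => g y && r) true = true) ↔ ∀ z ∈ l, g z = true
  | [] => by simp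
  | b :: l => by simp [List.foldr_cons, foldr_all_iff g l]

/-- boolean sublist test -/
def subB (d e : List ℕ) : Bool := d.foldr (fun y r => memB y e && r) true

theorem subB_iff {d e : List ℕ} : subB d e = true ↔ ∀ x ∈ d, x ∈ e := by
  rw [subB, foldr_all_iff]
  simp [memB_iff]

theorem subB_primrec : Primrec₂ subB :=
  (Primrec.list_foldr
    (h := fun (p : List ℕ × List ℕ) (q : ℕ × Bool) => memB q.1 p.2 && q.2)
    Primrec.fst (Primrec.const true)
    ((Primrec.and.comp
      (memB_primrec.comp (Primrec.fst.comp Primrec.snd) (Primrec.snd.comp Primrec.fst))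
      (Primrec.snd.comp Primrec.snd)).to₂)).to₂

/-- list-level Scott application on (codes of) finite sets -/
def appL (d e : List ℕ) : List ℕ :=
  d.flatMap fun n => if subB (dL n.unpair.2) e then [n.unpair.1] else []

theorem mem_appL {x : ℕ} {d e : List ℕ} :
    x ∈ appL d e ↔ ∃ u : ℕ, Nat.pair x u ∈ d ∧ ∀ z ∈ dL u, z ∈ e := by
  simp only [appL, List.mem_flatMap]
  constructor
  · rintro ⟨n, hn, hx⟩
    by_cases h : subB (dL n.unpair.2) e = true
    · rw [if_pos h] at hx
      simp only [List.mem_singleton] at hx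
      subst hx
      exact ⟨n.unpair.2, by rwa [Nat.pair_unpair], subB_iff.1 h⟩
    · simp [h] at hx
  · rintro ⟨u, hu, hsub⟩
    refine ⟨Nat.pair x u, hu, ?_⟩
    rw [if_pos (subB_iff.2 (by simpa using hsub))]
    simp

theorem appL_primrec : Primrec₂ appL :=
  (Primrec.list_flatMap
    (g := fun (p : List ℕ × List ℕ) (n : ℕ) =>
      if subB (dL n.unpair.2) p.2 then [n.unpair.1] else [])
    Primrec.fst
    (Primrec.ite
      (Primrec.eq.comp
        (subB_primrec.comp
          (dL_primrec.comp (Primrec.snd.comp (Primrec.unpair.comp Primrec.snd)))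
          (Primrec.snd.comp Primrec.fst))
        (Primrec.const true))
      (Primrec.list_cons.comp (Primrec.fst.comp (Primrec.unpair.comp Primrec.snd))
        (Primrec.const []))
      (Primrec.const [])).to₂).to₂

end ScottCE

namespace ScottCE

theorem mem_coe_ofNat {z u : ℕ} :
    z ∈ (ofNat (Finset ℕ) u : Set ℕ) ↔ z ∈ dL u := by
  rw [Finset.mem_coe, mem_ofNat_finset]

theorem coe_ofNat_subset {u : ℕ} {B : Set ℕ} :
    (ofNat (Finset ℕ) u : Set ℕ) ⊆ B ↔ ∀ z ∈ dL u, z ∈ B := by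
  constructor
  · exact fun h z hz => h (mem_coe_ofNat.2 hz)
  · exact fun h z hz => h z (mem_coe_ofNat.1 hz)

/-- correspondence between set-level and list-level application -/
theorem appL_corr {A B : Set ℕ} {d e : List ℕ}
    (hA : ∀ x, x ∈ A ↔ x ∈ d) (hB : ∀ x, x ∈ B ↔ x ∈ e) :
    ∀ x, x ∈ scottApp A B ↔ x ∈ appL d e := by
  intro x
  rw [mem_appL]
  constructor
  · rintro ⟨u, hu, hsub⟩
    exact ⟨u, (hA _).1 hu, fun z hz => (hB _).1 (hsub (mem_coe_ofNat.2 hz))⟩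
  · rintro ⟨u, hu, hsub⟩
    exact ⟨u, (hA _).2 hu, fun z hz => (hB _).2 (hsub z (mem_coe_ofNat.1 hz))⟩

theorem scottApp_mono {A A' B B' : Set ℕ} (hA : A ⊆ A') (hB : B ⊆ B') :
    scottApp A B ⊆ scottApp A' B' := by
  rintro x ⟨u, hu, hsub⟩
  exact ⟨u, hA hu, hsub.trans hB⟩

/-- the K combinator -/
def kB (n : ℕ) : Bool := memB n.unpair.1.unpair.1 (dL n.unpair.2)

def Kset : Set ℕ := {n | kB n = true}

/-- the S combinator -/
def sB (n : ℕ) : Bool :=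
  memB n.unpair.1.unpair.1.unpair.1
    (appL (appL (dL n.unpair.2) (dL n.unpair.1.unpair.1.unpair.2))
      (appL (dL n.unpair.1.unpair.2) (dL n.unpair.1.unpair.1.unpair.2)))

def Sset : Set ℕ := {n | sB n = true}

theorem kB_primrec : Primrec kB :=
  memB_primrec.comp
    (Primrec.fst.comp (Primrec.unpair.comp (Primrec.fst.comp Primrec.unpair)))
    (dL_primrec.comp (Primrec.snd.comp Primrec.unpair))

theorem sB_primrec : Primrec sB := by
  have u1 : Primrec fun n : ℕ => n.unpair.1 := Primrec.fst.comp Primrec.unpair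
  have u2 : Primrec fun n : ℕ => n.unpair.2 := Primrec.snd.comp Primrec.unpair
  have hx : Primrec fun n : ℕ => n.unpair.1.unpair.1.unpair.1 := u1.comp (u1.comp u1)
  have hc : Primrec fun n : ℕ => n.unpair.1.unpair.1.unpair.2 := u2.comp (u1.comp u1)
  have hb : Primrec fun n : ℕ => n.unpair.1.unpair.2 := u2.comp u1
  have ha : Primrec fun n : ℕ => n.unpair.2 := u2
  exact memB_primrec.comp hx
    (appL_primrec.comp
      (appL_primrec.comp (dL_primrec.comp ha) (dL_primrec.comp hc))
      (appL_primrec.comp (dL_primrec.comp hb) (dL_primrec.comp hc)))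

theorem Kset_re : REPred (· ∈ Kset) := by
  have : ComputablePred (· ∈ Kset) :=
    ComputablePred.computable_iff.2 ⟨kB, kB_primrec.to_comp, rfl⟩
  exact this.to_re

theorem Sset_re : REPred (· ∈ Sset) := by
  have : ComputablePred (· ∈ Sset) :=
    ComputablePred.computable_iff.2 ⟨sB, sB_primrec.to_comp, rfl⟩
  exact this.to_re

end ScottCE

namespace ScottCE

theorem ofNat_eqv (F : Finset ℕ) : ofNat (Finset ℕ) (eqv (Finset ℕ) F) = F :=
  (eqv (Finset ℕ)).symm_apply_apply F

theorem mem_Kset_iff {z v u : ℕ} :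
    Nat.pair (Nat.pair z v) u ∈ Kset ↔ z ∈ (ofNat (Finset ℕ) u : Finset ℕ) := by
  simp [Kset, kB, Nat.unpair_pair, mem_ofNat_finset, memB_iff]

theorem K_law (X Y : Set ℕ) : scottApp (scottApp Kset X) Y = X := by
  ext z
  constructor
  · rintro ⟨v, ⟨u, hK, hu⟩, -⟩
    exact hu (Finset.mem_coe.2 (mem_Kset_iff.1 hK))
  · intro hz
    refine ⟨eqv (Finset ℕ) (∅ : Finset ℕ), ⟨eqv (Finset ℕ) ({z} : Finset ℕ), ?_, ?_⟩, ?_⟩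
    · rw [mem_Kset_iff, ofNat_eqv]; simp
    · rw [ofNat_eqv]
      intro w hw
      simp only [Finset.coe_singleton, Set.mem_singleton_iff] at hw
      subst hw; exact hz
    · rw [ofNat_eqv]; simp

theorem mem_Sset_iff {x c b a : ℕ} :
    Nat.pair (Nat.pair (Nat.pair x c) b) a ∈ Sset ↔
      x ∈ scottApp
        (scottApp (ofNat (Finset ℕ) a : Set ℕ) (ofNat (Finset ℕ) c : Set ℕ))
        (scottApp (ofNat (Finset ℕ) b : Set ℕ) (ofNat (Finset ℕ) c : Set ℕ)) := by
  have h1 := appL_corr (A := (ofNat (Finset ℕ) a : Set ℕ))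
    (B := (ofNat (Finset ℕ) c : Set ℕ)) (d := dL a) (e := dL c)
    (fun _ => mem_coe_ofNat) (fun _ => mem_coe_ofNat)
  have h2 := appL_corr (A := (ofNat (Finset ℕ) b : Set ℕ))
    (B := (ofNat (Finset ℕ) c : Set ℕ)) (d := dL b) (e := dL c)
    (fun _ => mem_coe_ofNat) (fun _ => mem_coe_ofNat)
  have h3 := appL_corr h1 h2
  simp only [Sset, Set.mem_setOf_eq, sB, Nat.unpair_pair, memB_iff]
  exact (h3 x).symm

theorem S_law (X Y Z : Set ℕ) :
    scottApp (scottApp (scottApp Sset X) Y) Z =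
      scottApp (scottApp X Z) (scottApp Y Z) := by
  ext x
  constructor
  · rintro ⟨c, ⟨b, ⟨a, hS, haX⟩, hbY⟩, hcZ⟩
    exact scottApp_mono (scottApp_mono haX hcZ) (scottApp_mono hbY hcZ)
      (mem_Sset_iff.1 hS)
  · rintro ⟨u, ⟨w, hxX, hwZ⟩, huYZ⟩
    classical
    set g : ℕ → ℕ := fun y =>
      if h : ∃ w', Nat.pair y w' ∈ Y ∧ (ofNat (Finset ℕ) w' : Set ℕ) ⊆ Z
      then h.choose else 0 with hgdef
    have hg : ∀ y ∈ (ofNat (Finset ℕ) u : Finset ℕ),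
        Nat.pair y (g y) ∈ Y ∧ (ofNat (Finset ℕ) (g y) : Set ℕ) ⊆ Z := by
      intro y hy
      have h := huYZ (Finset.mem_coe.2 hy)
      obtain ⟨w', hw'⟩ := h
      have hex : ∃ w', Nat.pair y w' ∈ Y ∧ (ofNat (Finset ℕ) w' : Set ℕ) ⊆ Z := ⟨w', hw'⟩
      rw [hgdef]; simp only [dif_pos hex]
      exact hex.choose_spec
    set Fa : Finset ℕ := {Nat.pair (Nat.pair x u) w} with hFa
    set Fb : Finset ℕ := (ofNat (Finset ℕ) u).image (fun y => Nat.pair y (g y)) with hFb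
    set Fc : Finset ℕ :=
      (ofNat (Finset ℕ) w) ∪ (ofNat (Finset ℕ) u).biUnion
        (fun y => ofNat (Finset ℕ) (g y)) with hFc
    refine ⟨eqv (Finset ℕ) Fc, ⟨eqv (Finset ℕ) Fb, ⟨eqv (Finset ℕ) Fa, ?_, ?_⟩, ?_⟩, ?_⟩
    · rw [mem_Sset_iff, ofNat_eqv, ofNat_eqv, ofNat_eqv]
      refine ⟨u, ⟨w, ?_, ?_⟩, ?_⟩
      · simp [hFa]
      · intro z hz
        simp only [hFc, Finset.coe_union, Set.mem_union, Finset.mem_coe] at *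
        exact Or.inl hz
      · intro y hy
        rw [Finset.mem_coe] at hy
        refine ⟨g y, ?_, ?_⟩
        · simp only [hFb, Finset.mem_coe, Finset.mem_image]
          exact ⟨y, hy, rfl⟩
        · intro z hz
          simp only [hFc, Finset.coe_union, Set.mem_union, Finset.mem_coe,
            Finset.mem_biUnion]
          exact Or.inr ⟨y, hy, Finset.mem_coe.1 hz⟩
    · intro z hz
      rw [ofNat_eqv] at hz
      simp only [hFa, Finset.coe_singleton, Set.mem_singleton_iff] at hz
      subst hz; exact hxX
    · intro z hz
      rw [ofNat_eqv] at hz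
      simp only [hFb, Finset.coe_image, Set.mem_image, Finset.mem_coe] at hz
      obtain ⟨y, hy, rfl⟩ := hz
      exact (hg y hy).1
    · intro z hz
      rw [ofNat_eqv] at hz
      simp only [hFc, Finset.coe_union, Set.mem_union, Finset.mem_coe,
        Finset.mem_biUnion] at hz
      rcases hz with hz | ⟨y, hy, hz⟩
      · exact hwZ (Finset.mem_coe.2 hz)
      · exact (hg y hy).2 (Finset.mem_coe.2 hz)

end ScottCE

namespace ScottCE

theorem re_of_exists {f : ℕ → ℕ → Bool} (hf : Computable₂ f) :
    REPred fun x : ℕ => ∃ k, f x k = true := by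
  have := (Partrec.rfind hf.partrec₂).dom_re
  refine this.of_eq fun x => ?_
  rw [Nat.rfind_dom]
  constructor
  · rintro ⟨n, h, -⟩
    exact ⟨n, by simpa using h⟩
  · rintro ⟨n, h⟩
    exact ⟨n, by simpa using h, fun {m} _ => trivial⟩

theorem exists_code_of_re {p : ℕ → Prop} (h : REPred p) :
    ∃ f : ℕ → ℕ → Bool, Primrec₂ f ∧
      (∀ x k k', k ≤ k' → f x k = true → f x k' = true) ∧
      ∀ x, p x ↔ ∃ k, f x k = true := by
  have h2 : Partrec fun n : ℕ =>
      (Part.assert (p n) fun _ => Part.some ()).map fun _ => 0 :=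
    h.map ((Computable.const 0).comp Computable.fst).to₂
  obtain ⟨c, hc⟩ := Nat.Partrec.Code.exists_code.1 (Partrec.nat_iff.1 h2)
  refine ⟨fun x k => (Nat.Partrec.Code.evaln k c x).isSome, ?_, ?_, ?_⟩
  · exact (Primrec.option_isSome.comp
      (Nat.Partrec.Code.primrec_evaln.comp
        ((Primrec.snd.pair (Primrec.const c)).pair Primrec.fst))).to₂
  · intro x k k' hk hkx
    obtain ⟨a, ha⟩ := Option.isSome_iff_exists.1 hkx
    exact Option.isSome_iff_exists.2
      ⟨a, Nat.Partrec.Code.evaln_mono hk ha⟩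
  · intro x
    have hdom : p x ↔
        ((Part.assert (p x) fun _ => Part.some ()).map fun _ => (0 : ℕ)).Dom := by
      simp [Part.assert]
    rw [hdom]
    have : ((Part.assert (p x) fun _ => Part.some ()).map fun _ => (0 : ℕ)).Dom ↔
        ∃ a, a ∈ Nat.Partrec.Code.eval c x := by
      simp only [hc]; exact Part.dom_iff_mem
    rw [this]
    constructor
    · rintro ⟨a, ha⟩
      obtain ⟨k, hk⟩ := Nat.Partrec.Code.evaln_complete.1 ha
      exact ⟨k, Option.isSome_iff_exists.2 ⟨a, hk⟩⟩
    · rintro ⟨k, hk⟩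
      obtain ⟨a, ha⟩ := Option.isSome_iff_exists.1 hk
      exact ⟨a, Nat.Partrec.Code.evaln_complete.2 ⟨k, ha⟩⟩

theorem exists_common_bound {fY : ℕ → ℕ → Bool}
    (mono : ∀ x k k', k ≤ k' → fY x k = true → fY x k' = true) :
    ∀ l : List ℕ, (∀ z ∈ l, ∃ k, fY z k = true) → ∃ k, ∀ z ∈ l, fY z k = true
  | [], _ => ⟨0, by simp⟩
  | b :: l, h => by
    obtain ⟨k1, hk1⟩ := h b (by simp)
    obtain ⟨k2, hk2⟩ := exists_common_bound mono l fun z hz => h z (by simp [hz])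
    refine ⟨max k1 k2, ?_⟩
    intro z hz
    rcases List.mem_cons.1 hz with rfl | hz
    · exact mono _ _ _ (le_max_left _ _) hk1
    · exact mono _ _ _ (le_max_right _ _) (hk2 z hz)

theorem scottApp_re {X Y : Set ℕ} (hX : REPred (· ∈ X)) (hY : REPred (· ∈ Y)) :
    REPred (· ∈ scottApp X Y) := by
  obtain ⟨fX, hfX, monoX, hXiff⟩ := exists_code_of_re hX
  obtain ⟨fY, hfY, monoY, hYiff⟩ := exists_code_of_re hY
  have hFprim : Primrec₂ fun (x m : ℕ) =>
      (fX (Nat.pair x m.unpair.1) m.unpair.2 &&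
        (dL m.unpair.1).foldr (fun y r => fY y m.unpair.2 && r) true) := by
    have h1 : Primrec fun p : ℕ × ℕ => fX (Nat.pair p.1 p.2.unpair.1) p.2.unpair.2 :=
      hfX.comp
        (Primrec₂.natPair.comp Primrec.fst
          (Primrec.fst.comp (Primrec.unpair.comp Primrec.snd)))
        (Primrec.snd.comp (Primrec.unpair.comp Primrec.snd))
    have h2 : Primrec fun p : ℕ × ℕ =>
        (dL p.2.unpair.1).foldr (fun y r => fY y p.2.unpair.2 && r) true :=
      Primrec.list_foldr
        (h := fun (p : ℕ × ℕ) (q : ℕ × Bool) => fY q.1 p.2.unpair.2 && q.2)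
        (dL_primrec.comp (Primrec.fst.comp (Primrec.unpair.comp Primrec.snd)))
        (Primrec.const true)
        ((Primrec.and.comp
          (hfY.comp (Primrec.fst.comp Primrec.snd)
            (Primrec.snd.comp (Primrec.unpair.comp (Primrec.snd.comp Primrec.fst))))
          (Primrec.snd.comp Primrec.snd)).to₂)
    exact (Primrec.and.comp h1 h2).to₂
  refine (re_of_exists hFprim.to_comp).of_eq fun x => ?_
  constructor
  · rintro ⟨m, hm⟩
    rw [Bool.and_eq_true] at hm
    refine ⟨m.unpair.1, hXiff _ |>.2 ⟨m.unpair.2, hm.1⟩, ?_⟩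
    rw [coe_ofNat_subset]
    intro z hz
    exact (hYiff z).2 ⟨m.unpair.2, (foldr_all_iff _ _).1 hm.2 z hz⟩
  · rintro ⟨u, hu, hsub⟩
    obtain ⟨k0, hk0⟩ := (hXiff _).1 hu
    rw [coe_ofNat_subset] at hsub
    obtain ⟨k1, hk1⟩ := exists_common_bound monoY (dL u)
      fun z hz => (hYiff z).1 (hsub z hz)
    refine ⟨Nat.pair u (max k0 k1), ?_⟩
    rw [Bool.and_eq_true, Nat.unpair_pair]
    exact ⟨monoX _ _ _ (le_max_left _ _) hk0,
      (foldr_all_iff _ _).2 fun z hz => monoY _ _ _ (le_max_right _ _) (hk1 z hz)⟩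

end ScottCE

/-- The combinators `K, S` for Scott's application can be chosen computably
enumerable, and Scott's application preserves computable enumerability; hence
the c.e. subsets of `ℕ` with Scott's application form a total combinatory
algebra `ℰ`. -/
theorem scott_ce_model :
    (∃ K S : Set ℕ, REPred (· ∈ K) ∧ REPred (· ∈ S) ∧
      ∀ X Y Z : Set ℕ,
        scottApp (scottApp K X) Y = X ∧
        scottApp (scottApp (scottApp S X) Y) Z =
          scottApp (scottApp X Z) (scottApp Y Z)) ∧
    ∀ X Y : Set ℕ, REPred (· ∈ X) → REPred (· ∈ Y) →
      REPred (· ∈ scottApp X Y) := by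
  refine ⟨⟨ScottCE.Kset, ScottCE.Sset, ScottCE.Kset_re, ScottCE.Sset_re,
    fun X Y Z => ⟨ScottCE.K_law X Y, ScottCE.S_law X Y Z⟩⟩,
    fun X Y hX hY => ScottCE.scottApp_re hX hY⟩
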